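/- Let ℓ(z) = log(1 + exp(−z)) be the logistic loss, let g : ℝ^d → ℝ be differentiable and 1-strongly convex, let λ > 0, Δ ≥ 0, and let D = ((x_1,y_1),…,(x_n,y_n)) be a dataset with x_i ∈ ℝ^d, y_i ∈ {−1,1}. Then for every b ∈ ℝ^d the perturbed objective F(·; D, b, Δ) has a unique global minimizer w̄ ∈ ℝ^d, and w̄ is the minimizer for noise vector b if and only if b = −nλ·∇g(w̄) − nΔ·w̄ − Σ_{i=1}^n y_i·ℓ'(y_i⟨w̄, x_i⟩)·x_i. In particular, the map sending b to the minimizer of F(·; D, b, Δ) is a bijection of ℝ^d. -/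

import Mathlib

open Finset

/-- The logistic loss `ℓ(z) = log(1 + exp(−z))`. -/
noncomputable def logisticLoss (z : ℝ) : ℝ := Real.log (1 + Real.exp (-z))

/-- The perturbed objective
`F(w; D, b, Δ) = (1/n)·Σᵢ ℓ(yᵢ⟨w,xᵢ⟩) + (1/n)⟨b,w⟩ + (Δ/2)‖w‖² + λ·g(w)`
with logistic loss `ℓ`. -/
noncomputable def perturbedObj {d n : ℕ}
    (x : Fin n → EuclideanSpace ℝ (Fin d)) (y : Fin n → ℝ)
    (g : EuclideanSpace ℝ (Fin d) → ℝ) (lam Δ : ℝ)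
    (b : EuclideanSpace ℝ (Fin d)) (w : EuclideanSpace ℝ (Fin d)) : ℝ :=
  (1 / n) * ∑ i, logisticLoss (y i * (inner ℝ w (x i) : ℝ)) + (1 / n) * (inner ℝ b w : ℝ)
    + (Δ / 2) * ‖w‖ ^ 2 + lam * g w

/-! ### Auxiliary lemmas -/

noncomputable def logisticLoss' (z : ℝ) : ℝ := -1 / (1 + Real.exp z)

lemma logisticLoss_hasDerivAt (z : ℝ) : HasDerivAt logisticLoss (logisticLoss' z) z := by
  have h1 : (0:ℝ) < 1 + Real.exp (-z) := by positivity
  have h : HasDerivAt (fun t : ℝ => 1 + Real.exp (-t)) (-Real.exp (-z)) z := by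
    simpa using ((hasDerivAt_id z).neg.exp.const_add 1)
  have h2 := h.log (ne_of_gt h1)
  convert h2 using 1
  · rfl
  unfold logisticLoss'
  rw [Real.exp_neg]
  have hz := (Real.exp_pos z).ne'
  field_simp
  ring

lemma logisticLoss_deriv : deriv logisticLoss = logisticLoss' :=
  funext fun z => (logisticLoss_hasDerivAt z).deriv

lemma logisticLoss_convexOn : ConvexOn ℝ Set.univ logisticLoss := by
  refine Monotone.convexOn_univ_of_deriv
    (fun z => (logisticLoss_hasDerivAt z).differentiableAt) ?_
  rw [logisticLoss_deriv]
  intro a c hac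
  unfold logisticLoss'
  have ha : (0:ℝ) < 1 + Real.exp a := by positivity
  have hc : (0:ℝ) < 1 + Real.exp c := by positivity
  rw [div_le_div_iff₀ ha hc]
  nlinarith [Real.exp_le_exp.2 hac]

lemma clm_convexOn {E : Type*} [NormedAddCommGroup E] [NormedSpace ℝ E] (c : E →L[ℝ] ℝ) :
    ConvexOn ℝ Set.univ (fun w => c w) :=
  ⟨convex_univ, fun w _ v _ a b _ _ _ => le_of_eq (by simp [smul_eq_mul])⟩

lemma convexOn_finset_sum {E : Type*} [NormedAddCommGroup E] [NormedSpace ℝ E]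
    {ι : Type*} (s : Finset ι) {f : ι → E → ℝ}
    (h : ∀ i ∈ s, ConvexOn ℝ Set.univ (f i)) :
    ConvexOn ℝ Set.univ (fun w => ∑ i ∈ s, f i w) := by
  induction s using Finset.cons_induction with
  | empty => simpa using convexOn_const (0:ℝ) convex_univ
  | cons i s hi ih =>
    simp only [Finset.sum_cons]
    exact (h i (Finset.mem_cons_self i s)).add
      (ih fun j hj => h j (Finset.mem_cons_of_mem hj))

/-- First-order condition for convex functions: the tangent plane lies below the graph. -/
lemma ConvexOn.add_fderiv_le {E : Type*} [NormedAddCommGroup E] [NormedSpace ℝ E]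
    {f : E → ℝ} (hf : ConvexOn ℝ Set.univ f) {w : E} {L : E →L[ℝ] ℝ}
    (hL : HasFDerivAt f L w) (v : E) : f w + L (v - w) ≤ f v := by
  set A : ℝ →ᵃ[ℝ] E := AffineMap.lineMap w v with hA
  have hcomp : ConvexOn ℝ Set.univ (f ∘ A) := by
    simpa using hf.comp_affineMap A
  have hline : HasDerivAt (fun t : ℝ => A t) (v - w) 0 := by
    have h0 : HasDerivAt (fun t : ℝ => t • (v - w) + w) ((1:ℝ) • (v - w)) 0 :=
      ((hasDerivAt_id (0:ℝ)).smul_const (v - w)).add_const w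
    have he : (fun t : ℝ => A t) = fun t : ℝ => t • (v - w) + w := by
      funext t; simp [hA, AffineMap.lineMap_apply_module']
    rw [he]; simpa using h0
  have hfw : HasFDerivAt f L (A 0) := by
    rw [hA, AffineMap.lineMap_apply_zero]; exact hL
  have hd : HasDerivAt (f ∘ A) (L (v - w)) 0 := by
    simpa using hfw.comp_hasDerivAt 0 hline
  have hslope := hcomp.le_slope_of_hasDerivAt (Set.mem_univ (0:ℝ)) (Set.mem_univ (1:ℝ))
    one_pos hd
  have h0 : (f ∘ A) 0 = f w := by simp [hA]
  have h1 : (f ∘ A) 1 = f v := by simp [hA]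
  rw [slope_def_field, h0, h1] at hslope
  simp only [sub_zero, div_one] at hslope
  linarith

abbrev Euc (d : ℕ) := EuclideanSpace ℝ (Fin d)

section Aux

variable {d n : ℕ} (x : Fin n → EuclideanSpace ℝ (Fin d)) (y : Fin n → ℝ)
  (g : EuclideanSpace ℝ (Fin d) → ℝ) (lam Δ : ℝ)

/-- The gradient of the perturbed objective. -/
noncomputable def pGrad (b w : EuclideanSpace ℝ (Fin d)) : EuclideanSpace ℝ (Fin d) :=
  (1 / n : ℝ) • (∑ i, (y i * deriv logisticLoss (y i * (inner ℝ w (x i) : ℝ))) • x i)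
    + (1 / n : ℝ) • b + Δ • w + lam • gradient g w

lemma perturbedObj_hasGradientAt (hg : Differentiable ℝ g)
    (b w : EuclideanSpace ℝ (Fin d)) :
    HasGradientAt (perturbedObj x y g lam Δ b) (pGrad x y g lam Δ b w) w := by
  have hi : ∀ i : Fin n, HasFDerivAt
      (fun w : (Euc d) => logisticLoss (y i * (inner ℝ w (x i) : ℝ)))
      ((deriv logisticLoss (y i * (inner ℝ w (x i) : ℝ))) • (y i • innerSL ℝ (x i))) w := by
    intro i
    have hlin : HasFDerivAt (fun w : (Euc d) => y i * (inner ℝ w (x i) : ℝ))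
        (y i • innerSL ℝ (x i)) w := by
      have h0 := (innerSL ℝ (x i)).hasFDerivAt (x := w)
      have h1 := h0.const_mul (y i)
      have hfun : (fun w : (Euc d) => y i * (inner ℝ w (x i) : ℝ))
          = fun w : (Euc d) => y i * (innerSL ℝ (x i)) w := by
        funext v; rw [innerSL_apply_apply, real_inner_comm]
      rw [hfun]
      simpa using h1
    have hd : HasDerivAt logisticLoss
        (deriv logisticLoss (y i * (inner ℝ w (x i) : ℝ))) (y i * (inner ℝ w (x i) : ℝ)) := by
      rw [logisticLoss_deriv]; exact logisticLoss_hasDerivAt _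
    exact HasDerivAt.comp_hasFDerivAt (h₂ := logisticLoss) w hd hlin
  have h1 : HasFDerivAt (fun w : (Euc d) => (1 / n : ℝ) * ∑ i, logisticLoss (y i * (inner ℝ w (x i) : ℝ)))
      ((1 / n : ℝ) • ∑ i, (deriv logisticLoss (y i * (inner ℝ w (x i) : ℝ))) •
        (y i • innerSL ℝ (x i))) w :=
    (HasFDerivAt.fun_sum fun i _ => hi i).const_mul _
  have h2 : HasFDerivAt (fun w : (Euc d) => (1 / n : ℝ) * (inner ℝ b w : ℝ))
      ((1 / n : ℝ) • innerSL ℝ b) w := by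
    have h0 := (innerSL ℝ b).hasFDerivAt (x := w)
    simpa using h0.const_mul (1 / n : ℝ)
  have h3 : HasFDerivAt (fun w : (Euc d) => (Δ / 2) * ‖w‖ ^ 2)
      ((Δ / 2) • (2 • innerSL ℝ w)) w := by
    have h0 : HasFDerivAt (fun w : (Euc d) => ‖w‖ ^ 2) (2 • innerSL ℝ w) w :=
      (hasStrictFDerivAt_norm_sq w).hasFDerivAt
    exact h0.const_mul _
  have h4 : HasFDerivAt (fun w : (Euc d) => lam * g w)
      (lam • (InnerProductSpace.toDual ℝ (Euc d) (gradient g w))) w := by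
    have h0 : HasGradientAt g (gradient g w) w := (hg w).hasGradientAt
    rw [hasGradientAt_iff_hasFDerivAt] at h0
    exact h0.const_mul _
  have hF : HasFDerivAt (perturbedObj x y g lam Δ b)
      ((1 / n : ℝ) • (∑ i, (deriv logisticLoss (y i * (inner ℝ w (x i) : ℝ))) •
          (y i • innerSL ℝ (x i)))
        + (1 / n : ℝ) • innerSL ℝ b + (Δ / 2) • (2 • innerSL ℝ w)
        + lam • (InnerProductSpace.toDual ℝ (Euc d) (gradient g w))) w := by
    unfold perturbedObj
    exact ((h1.add h2).add h3).add h4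
  rw [hasGradientAt_iff_hasFDerivAt]
  have hdual : InnerProductSpace.toDual ℝ (Euc d) (pGrad x y g lam Δ b w)
      = ((1 / n : ℝ) • (∑ i, (deriv logisticLoss (y i * (inner ℝ w (x i) : ℝ))) •
          (y i • innerSL ℝ (x i)))
        + (1 / n : ℝ) • innerSL ℝ b + (Δ / 2) • (2 • innerSL ℝ w)
        + lam • (InnerProductSpace.toDual ℝ (Euc d) (gradient g w))) := by
    apply ContinuousLinearMap.ext
    intro v
    simp only [pGrad, inner_add_left, real_inner_smul_left, sum_inner,
      InnerProductSpace.toDual_apply_apply, ContinuousLinearMap.add_apply,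
      ContinuousLinearMap.smul_apply, ContinuousLinearMap.sum_apply, innerSL_apply_apply,
      smul_eq_mul, nsmul_eq_mul, Nat.cast_ofNat]
    rw [Finset.mul_sum, Finset.mul_sum]
    have hs : ∀ i ∈ Finset.univ, (1 / (n:ℝ)) * ((y i * deriv logisticLoss (y i * (inner ℝ w (x i):ℝ))) * (inner ℝ (x i) v : ℝ))
        = (1 / (n:ℝ)) * (deriv logisticLoss (y i * (inner ℝ w (x i):ℝ)) * (y i * (inner ℝ (x i) v : ℝ))) :=
      fun i _ => by ring
    rw [Finset.sum_congr rfl hs]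
    ring
  rw [hdual]
  exact hF

lemma perturbedObj_strongConvexOn (hΔ : 0 ≤ Δ) (hlam : 0 ≤ lam)
    (hgsc : StrongConvexOn Set.univ 1 g) (b : EuclideanSpace ℝ (Fin d)) :
    StrongConvexOn Set.univ lam (perturbedObj x y g lam Δ b) := by
  rw [strongConvexOn_iff_convex]
  have hn0 : (0:ℝ) ≤ 1 / n := by positivity
  have h1 : ConvexOn ℝ Set.univ
      (fun w : (Euc d) => (1 / n : ℝ) * ∑ i, logisticLoss (y i * (inner ℝ w (x i) : ℝ))) := by
    have hsum : ConvexOn ℝ Set.univ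
        (fun w : (Euc d) => ∑ i, logisticLoss (y i * (inner ℝ w (x i) : ℝ))) := by
      apply convexOn_finset_sum
      intro i _
      have hc := logisticLoss_convexOn.comp_affineMap
        ((y i • innerSL ℝ (x i)).toLinearMap.toAffineMap)
      have he : (logisticLoss ∘ ((y i • innerSL ℝ (x i)).toLinearMap.toAffineMap))
          = fun w : (Euc d) => logisticLoss (y i * (inner ℝ w (x i) : ℝ)) := by
        funext v
        simp [Function.comp, innerSL_apply_apply, real_inner_comm, mul_comm]
      rw [he] at hc
      simpa using hc
    simpa [smul_eq_mul] using hsum.smul hn0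
  have h2 : ConvexOn ℝ Set.univ (fun w : (Euc d) => (1 / n : ℝ) * (inner ℝ b w : ℝ)) := by
    have := clm_convexOn ((1 / n : ℝ) • innerSL ℝ b)
    have he : (fun w : (Euc d) => ((1 / n : ℝ) • innerSL ℝ b) w)
        = fun w : (Euc d) => (1 / n : ℝ) * (inner ℝ b w : ℝ) := by
      funext v; simp [innerSL_apply_apply]
    rwa [he] at this
  have h3 : ConvexOn ℝ Set.univ (fun w : (Euc d) => (Δ / 2) * ‖w‖ ^ 2) := by
    have hsc : StrongConvexOn (Set.univ : Set (Euc d)) Δ (fun w : (Euc d) => (Δ / 2) * ‖w‖ ^ 2) := by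
      rw [strongConvexOn_iff_convex]
      simpa using convexOn_const (0:ℝ) convex_univ
    exact hsc.convexOn fun r => by positivity
  have h4 : ConvexOn ℝ Set.univ (fun w : (Euc d) => lam * (g w - 1 / 2 * ‖w‖ ^ 2)) := by
    have := (strongConvexOn_iff_convex.mp hgsc).smul hlam
    simpa [smul_eq_mul] using this
  have hall := ((h1.add h2).add h3).add h4
  have he : (fun w : (Euc d) => perturbedObj x y g lam Δ b w - lam / 2 * ‖w‖ ^ 2)
      = ((((fun w : (Euc d) => (1 / n : ℝ) * ∑ i, logisticLoss (y i * (inner ℝ w (x i) : ℝ)))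
          + fun w : (Euc d) => (1 / n : ℝ) * (inner ℝ b w : ℝ))
          + fun w : (Euc d) => (Δ / 2) * ‖w‖ ^ 2)
          + fun w : (Euc d) => lam * (g w - 1 / 2 * ‖w‖ ^ 2)) := by
    funext w
    simp only [perturbedObj, Pi.add_apply]
    ring
  rw [he]
  exact hall

end Aux

set_option maxHeartbeats 2000000 in
/-- For the logistic loss and a differentiable 1-strongly convex regularizer `g`, the perturbed
objective has a unique global minimizer for every noise vector `b`; `wbar` minimizes the objective
with noise `b` iff `b = −nλ∇g(wbar) − nΔ·wbar − Σᵢ yᵢ ℓ'(yᵢ⟨wbar,xᵢ⟩)·xᵢ`; and the map sending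
the noise vector to the corresponding minimizer is a bijection of `ℝ^d`. -/
theorem perturbedObj_unique_min_and_bijective {d n : ℕ} (hn : 1 ≤ n)
    (g : EuclideanSpace ℝ (Fin d) → ℝ)
    (hg : Differentiable ℝ g) (hgsc : StrongConvexOn Set.univ 1 g)
    (lam Δ : ℝ) (hlam : 0 < lam) (hΔ : 0 ≤ Δ)
    (x : Fin n → EuclideanSpace ℝ (Fin d)) (y : Fin n → ℝ)
    (hy : ∀ i, y i = 1 ∨ y i = -1) :
    (∀ b : EuclideanSpace ℝ (Fin d),
        ∃! w : EuclideanSpace ℝ (Fin d), ∀ v, perturbedObj x y g lam Δ b w ≤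
          perturbedObj x y g lam Δ b v) ∧
    (∀ (b wbar : EuclideanSpace ℝ (Fin d)),
        (∀ v, perturbedObj x y g lam Δ b wbar ≤ perturbedObj x y g lam Δ b v) ↔
          b = -((n * lam) • gradient g wbar) - (n * Δ) • wbar
              - ∑ i, (y i * deriv logisticLoss (y i * (inner ℝ wbar (x i) : ℝ))) • x i) ∧
    (∃ m : EuclideanSpace ℝ (Fin d) → EuclideanSpace ℝ (Fin d),
        Function.Bijective m ∧
          ∀ b v, perturbedObj x y g lam Δ b (m b) ≤ perturbedObj x y g lam Δ b v) := by
  set F := perturbedObj x y g lam Δ with hF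
  have hn' : (n : ℝ) ≠ 0 := by
    have : (0:ℝ) < n := by exact_mod_cast hn
    exact this.ne'
  have hgradF : ∀ b w : (Euc d), HasGradientAt (F b) (pGrad x y g lam Δ b w) w :=
    fun b w => perturbedObj_hasGradientAt x y g lam Δ hg b w
  have hSC : ∀ b : (Euc d), StrongConvexOn Set.univ lam (F b) :=
    fun b => perturbedObj_strongConvexOn x y g lam Δ hΔ hlam.le hgsc b
  have hconv : ∀ b : (Euc d), ConvexOn ℝ Set.univ (F b) :=
    fun b => (hSC b).convexOn fun r => by positivity
  have hdiffF : ∀ b : (Euc d), Differentiable ℝ (F b) :=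
    fun b w => ((hgradF b w).differentiableAt)
  -- minimality iff gradient vanishes
  have key1 : ∀ b w : (Euc d), (∀ v, F b w ≤ F b v) ↔ pGrad x y g lam Δ b w = 0 := by
    intro b w
    constructor
    · intro hmin
      have hloc : IsLocalMin (F b) w := Filter.Eventually.of_forall hmin
      have hz := hloc.fderiv_eq_zero
      have hfd : HasFDerivAt (F b)
          (InnerProductSpace.toDual ℝ (Euc d) (pGrad x y g lam Δ b w)) w :=
        hasGradientAt_iff_hasFDerivAt.mp (hgradF b w)
      have := hfd.fderiv
      rw [hz] at this
      have h0 : InnerProductSpace.toDual ℝ (Euc d) (pGrad x y g lam Δ b w) = 0 := this.symm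
      exact (InnerProductSpace.toDual ℝ (Euc d)).injective (by rw [map_zero]; exact h0)
    · intro hzero
      intro v
      have hfd : HasFDerivAt (F b)
          (InnerProductSpace.toDual ℝ (Euc d) (pGrad x y g lam Δ b w)) w :=
        hasGradientAt_iff_hasFDerivAt.mp (hgradF b w)
      rw [hzero] at hfd
      simp only [map_zero] at hfd
      have := (hconv b).add_fderiv_le hfd v
      simpa using this
  -- gradient vanishes iff b has the required form
  have key2 : ∀ b w : (Euc d), pGrad x y g lam Δ b w = 0 ↔
      b = -((n * lam) • gradient g w) - (n * Δ) • w
        - ∑ i, (y i * deriv logisticLoss (y i * (inner ℝ w (x i) : ℝ))) • x i := by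
    intro b w
    set S : (Euc d) := ∑ i, (y i * deriv logisticLoss (y i * (inner ℝ w (x i) : ℝ))) • x i
    set G : (Euc d) := gradient g w
    have hmul : (n : ℝ) • pGrad x y g lam Δ b w
        = S + b + ((n : ℝ) * Δ) • w + ((n : ℝ) * lam) • G := by
      simp only [pGrad, smul_add, smul_smul]
      rw [mul_one_div_cancel hn']
      simp only [one_smul]
      rfl
    constructor
    · intro h
      have h0 : S + b + ((n : ℝ) * Δ) • w + ((n : ℝ) * lam) • G = 0 := by
        rw [← hmul, h, smul_zero]
      have : b = (S + b + ((n : ℝ) * Δ) • w + ((n : ℝ) * lam) • G)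
          - ((n : ℝ) * lam) • G - ((n : ℝ) * Δ) • w - S := by abel
      rw [h0] at this
      rw [this]
      abel
    · intro h
      have h0 : S + b + ((n : ℝ) * Δ) • w + ((n : ℝ) * lam) • G = 0 := by
        rw [h]; abel
      have : (n : ℝ) • pGrad x y g lam Δ b w = 0 := by rw [hmul, h0]
      rcases smul_eq_zero.mp this with h' | h'
      · exact absurd h' hn'
      · exact h'
  -- existence of a global minimizer
  have hexists : ∀ b : (Euc d), ∃ w : (Euc d), ∀ v, F b w ≤ F b v := by
    intro b
    set c : (Euc d) → ℝ := fun w => F b w - lam / 2 * ‖w‖ ^ 2 with hc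
    have hcconv : ConvexOn ℝ Set.univ c := strongConvexOn_iff_convex.mp (hSC b)
    have hnormsq : HasFDerivAt (fun w : (Euc d) => lam / 2 * ‖w‖ ^ 2)
        ((lam / 2) • (2 • innerSL ℝ (0:(Euc d)))) (0:(Euc d)) :=
      (hasStrictFDerivAt_norm_sq (0:(Euc d))).hasFDerivAt.const_mul _
    have hFfd : HasFDerivAt (F b)
        (InnerProductSpace.toDual ℝ (Euc d) (pGrad x y g lam Δ b 0)) 0 :=
      hasGradientAt_iff_hasFDerivAt.mp (hgradF b 0)
    have hcfd : HasFDerivAt c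
        (InnerProductSpace.toDual ℝ (Euc d) (pGrad x y g lam Δ b 0)
          - (lam / 2) • (2 • innerSL ℝ (0:(Euc d)))) 0 := hFfd.sub hnormsq
    set L : (Euc d) →L[ℝ] ℝ := InnerProductSpace.toDual ℝ (Euc d) (pGrad x y g lam Δ b 0)
      - (lam / 2) • (2 • innerSL ℝ (0:(Euc d))) with hL
    have hlower : ∀ v : (Euc d), F b 0 - ‖L‖ * ‖v‖ + lam / 2 * ‖v‖ ^ 2 ≤ F b v := by
      intro v
      have h1 := hcconv.add_fderiv_le hcfd v
      rw [sub_zero] at h1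
      have h2 : c 0 = F b 0 := by simp [hc]
      have habs : |L v| ≤ ‖L‖ * ‖v‖ := by
        simpa [Real.norm_eq_abs] using L.le_opNorm v
      have h3 : -(‖L‖ * ‖v‖) ≤ L v := by
        have := neg_abs_le (L v); linarith
      have h4 : c v = F b v - lam / 2 * ‖v‖ ^ 2 := rfl
      rw [h2, h4] at h1
      linarith
    set R : ℝ := 2 * ‖L‖ / lam + 1 with hR
    have hR0 : 0 < R := by positivity
    obtain ⟨w, hwB, hwmin⟩ := (isCompact_closedBall (0:(Euc d)) R).exists_isMinOn
      ⟨0, Metric.mem_closedBall_self hR0.le⟩ ((hdiffF b).continuous.continuousOn)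
    refine ⟨w, fun v => ?_⟩
    by_cases hv : v ∈ Metric.closedBall (0:(Euc d)) R
    · exact hwmin hv
    · have hvn : R < ‖v‖ := by
        simpa [Metric.mem_closedBall, dist_zero_right, not_le] using hv
      have hw0 : F b w ≤ F b 0 := hwmin (Metric.mem_closedBall_self hR0.le)
      have hlow := hlower v
      have h5 : 2 * ‖L‖ + lam < lam * ‖v‖ := by
        have := (mul_lt_mul_of_pos_left hvn hlam)
        calc 2 * ‖L‖ + lam = lam * R := by rw [hR]; field_simp
          _ < lam * ‖v‖ := this
      have h6 : ‖L‖ * ‖v‖ ≤ lam / 2 * ‖v‖ ^ 2 := by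
        nlinarith [norm_nonneg v, norm_nonneg L, hR0.trans hvn]
      linarith
  -- uniqueness and assembly
  have part1 : ∀ b : (Euc d), ∃! w : (Euc d), ∀ v, F b w ≤ F b v := by
    intro b
    obtain ⟨w, hw⟩ := hexists b
    refine ⟨w, hw, fun w' hw' => ?_⟩
    exact ((hSC b).strictConvexOn hlam).eq_of_isMinOn
      (isMinOn_iff.mpr fun v _ => hw' v) (isMinOn_iff.mpr fun v _ => hw v)
      (Set.mem_univ _) (Set.mem_univ _)
  have part2 : ∀ (b wbar : (Euc d)),
      (∀ v, F b wbar ≤ F b v) ↔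
        b = -((n * lam) • gradient g wbar) - (n * Δ) • wbar
          - ∑ i, (y i * deriv logisticLoss (y i * (inner ℝ wbar (x i) : ℝ))) • x i :=
    fun b wbar => (key1 b wbar).trans (key2 b wbar)
  refine ⟨part1, part2, ?_⟩
  choose m hm using fun b => (part1 b).exists
  refine ⟨m, ⟨?_, ?_⟩, hm⟩
  · intro b1 b2 hmeq
    have e1 := (part2 b1 (m b1)).mp (hm b1)
    have e2 := (part2 b2 (m b2)).mp (hm b2)
    rw [e1, e2, hmeq]
  · intro w
    set bw : (Euc d) := -((n * lam) • gradient g w) - (n * Δ) • w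
      - ∑ i, (y i * deriv logisticLoss (y i * (inner ℝ w (x i) : ℝ))) • x i with hbw
    refine ⟨bw, ?_⟩
    have hwmin : ∀ v, F bw w ≤ F bw v := (part2 bw w).mpr hbw
    exact (part1 bw).unique (hm bw) hwmin
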